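/- Let X be a Polish space with a Borel probability measure μ, and let (ν_n) be Borel probability measures on X × X with both marginals equal to μ, such that ∫ f₁(x) f₂(y) dν_n(x,y) → ∫ f₁ f₂ dμ for all bounded Borel functions f₁, f₂ on X. Let μ̃ be the pushforward of μ under the diagonal map x ↦ (x,x). Then ν_n converges to μ̃ in the weak* topology, i.e. ∫ f dν_n → ∫ f dμ̃ for every bounded continuous function f on X × X. -/

import Mathlib

open MeasureTheory Filter Topology

open scoped ENNReal NNReal
open Metric Set

lemma stmt4_bdd_integrable {X : Type*} [MeasurableSpace X] (ν : Measure X) [IsFiniteMeasure ν]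
    {g : X → ℝ} (hg : Measurable g) {C : ℝ} (hC : ∀ x, |g x| ≤ C) : Integrable g ν :=
  ⟨hg.aestronglyMeasurable, HasFiniteIntegral.of_bounded (C := C)
    (Filter.Eventually.of_forall (fun x => by simpa using hC x))⟩

lemma stmt4_sq {X : Type*} [MeasurableSpace X]
    (μ : Measure X) [IsProbabilityMeasure μ]
    (ν : ℕ → Measure (X × X)) (hprob : ∀ n, IsProbabilityMeasure (ν n))
    (h1 : ∀ n, Measure.map Prod.fst (ν n) = μ)
    (h2 : ∀ n, Measure.map Prod.snd (ν n) = μ)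
    (hcorr : ∀ f₁ f₂ : X → ℝ, Measurable f₁ → Measurable f₂ →
      (∃ C, ∀ x, |f₁ x| ≤ C) → (∃ C, ∀ x, |f₂ x| ≤ C) →
      Tendsto (fun n => ∫ p, f₁ p.1 * f₂ p.2 ∂(ν n)) atTop (𝓝 (∫ x, f₁ x * f₂ x ∂μ)))
    (g : X → ℝ) (hg : Measurable g) (C : ℝ) (hC : ∀ x, |g x| ≤ C) :
    Tendsto (fun n => ∫ p, (g p.1 - g p.2)^2 ∂(ν n)) atTop (𝓝 0) := by
  have hCC : ∀ x y : X, |g x * g y| ≤ C * C := by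
    intro x y
    rw [abs_mul]
    exact mul_le_mul (hC x) (hC y) (abs_nonneg _) ((abs_nonneg _).trans (hC x))
  have hmul : Measurable (fun x => g x * g x) := hg.mul hg
  have hI1 : ∀ n, Integrable (fun p : X × X => g p.1 * g p.1) (ν n) := fun n => by
    haveI := hprob n
    exact stmt4_bdd_integrable _ ((hg.comp measurable_fst).mul (hg.comp measurable_fst))
      (fun p => hCC _ _)
  have hI2 : ∀ n, Integrable (fun p : X × X => g p.1 * g p.2) (ν n) := fun n => by
    haveI := hprob n
    exact stmt4_bdd_integrable _ ((hg.comp measurable_fst).mul (hg.comp measurable_snd))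
      (fun p => hCC _ _)
  have hI3 : ∀ n, Integrable (fun p : X × X => g p.2 * g p.2) (ν n) := fun n => by
    haveI := hprob n
    exact stmt4_bdd_integrable _ ((hg.comp measurable_snd).mul (hg.comp measurable_snd))
      (fun p => hCC _ _)
  have e1 : ∀ n, ∫ p, g p.1 * g p.1 ∂(ν n) = ∫ x, g x * g x ∂μ := by
    intro n
    rw [← h1 n, integral_map measurable_fst.aemeasurable
      (hmul.aestronglyMeasurable)]
  have e3 : ∀ n, ∫ p, g p.2 * g p.2 ∂(ν n) = ∫ x, g x * g x ∂μ := by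
    intro n
    rw [← h2 n, integral_map measurable_snd.aemeasurable
      (hmul.aestronglyMeasurable)]
  have expand : ∀ n, ∫ p, (g p.1 - g p.2)^2 ∂(ν n)
      = ∫ x, g x * g x ∂μ - 2 * ∫ p, g p.1 * g p.2 ∂(ν n) + ∫ x, g x * g x ∂μ := by
    intro n
    have : (fun p : X × X => (g p.1 - g p.2)^2)
        = fun p => (g p.1 * g p.1 - 2 * (g p.1 * g p.2)) + g p.2 * g p.2 := by
      funext p; ring
    calc ∫ p, (g p.1 - g p.2)^2 ∂(ν n)
        = ∫ p, ((g p.1 * g p.1 - 2 * (g p.1 * g p.2)) + g p.2 * g p.2) ∂(ν n) := by rw [this]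
      _ = (∫ p, (g p.1 * g p.1 - 2 * (g p.1 * g p.2)) ∂(ν n)) + ∫ p, g p.2 * g p.2 ∂(ν n) :=
          integral_add ((hI1 n).sub ((hI2 n).const_mul 2)) (hI3 n)
      _ = ((∫ p, g p.1 * g p.1 ∂(ν n)) - ∫ p, 2 * (g p.1 * g p.2) ∂(ν n))
            + ∫ p, g p.2 * g p.2 ∂(ν n) := by
          rw [integral_sub (hI1 n) ((hI2 n).const_mul 2)]
      _ = ∫ x, g x * g x ∂μ - 2 * ∫ p, g p.1 * g p.2 ∂(ν n) + ∫ x, g x * g x ∂μ := by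
          rw [MeasureTheory.integral_const_mul, e1 n, e3 n]
  simp_rw [expand]
  have hlim := (hcorr g g hg hg ⟨C, hC⟩ ⟨C, hC⟩).const_mul 2
  have := (tendsto_const_nhds (x := ∫ x, g x * g x ∂μ) (f := atTop)).sub hlim
    |>.add (tendsto_const_nhds (x := ∫ x, g x * g x ∂μ))
  convert this using 2
  ring

lemma stmt4_offdiag {X : Type*} [MetricSpace X] [MeasurableSpace X] [BorelSpace X]
    (μ : Measure X) [IsProbabilityMeasure μ]
    (ν : ℕ → Measure (X × X)) (hprob : ∀ n, IsProbabilityMeasure (ν n))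
    (h1 : ∀ n, Measure.map Prod.fst (ν n) = μ)
    (h2 : ∀ n, Measure.map Prod.snd (ν n) = μ)
    (hcorr : ∀ f₁ f₂ : X → ℝ, Measurable f₁ → Measurable f₂ →
      (∃ C, ∀ x, |f₁ x| ≤ C) → (∃ C, ∀ x, |f₂ x| ≤ C) →
      Tendsto (fun n => ∫ p, f₁ p.1 * f₂ p.2 ∂(ν n)) atTop (𝓝 (∫ x, f₁ x * f₂ x ∂μ)))
    (K : Set X) (hK : IsCompact K) (δ : ℝ) (hδ : 0 < δ) :
    Tendsto (fun n => ((ν n) {p : X × X | p.1 ∈ K ∧ δ ≤ dist p.1 p.2}).toReal)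
      atTop (𝓝 0) := by
  obtain ⟨t, htfin, htcov⟩ := (Metric.totallyBounded_iff.1 hK.totallyBounded) (δ/2) (half_pos hδ)
  set s := htfin.toFinset with hs
  -- indicator functions
  set g : X → X → ℝ := fun y => (ball y (δ/2)).indicator (fun _ => (1:ℝ)) with hgdef
  have hgmeas : ∀ y, Measurable (g y) := fun y =>
    measurable_const.indicator measurableSet_ball
  have hgbdd : ∀ y x, |g y x| ≤ 1 := by
    intro y x
    by_cases h : x ∈ ball y (δ/2) <;> simp [hgdef, Set.indicator_apply, h]
  -- the squared-difference functions
  set h : X → X × X → ℝ := fun y p => (g y p.1 - g y p.2)^2 with hhdef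
  have hhmeas : ∀ y, Measurable (h y) := fun y =>
    (((hgmeas y).comp measurable_fst).sub ((hgmeas y).comp measurable_snd)).pow_const 2
  have hhbdd : ∀ y p, |h y p| ≤ 4 := by
    intro y p
    have a1 := hgbdd y p.1
    have a2 := hgbdd y p.2
    rw [hhdef]
    simp only [abs_le] at a1 a2 ⊢
    constructor <;> nlinarith
  have hhnn : ∀ y p, 0 ≤ h y p := fun y p => sq_nonneg _
  -- bad set inclusion
  set Bad : Set (X × X) := {p : X × X | p.1 ∈ K ∧ δ ≤ dist p.1 p.2} with hBad
  set S : X → Set (X × X) := fun y => {p : X × X | 1 ≤ h y p} with hSdef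
  have hSmeas : ∀ y, MeasurableSet (S y) := fun y =>
    measurableSet_le measurable_const (hhmeas y)
  have hincl : Bad ⊆ ⋃ y ∈ s, S y := by
    intro p hp
    obtain ⟨hpK, hpd⟩ := hp
    obtain ⟨y, hy, hpy⟩ := Set.mem_iUnion₂.1 (htcov hpK)
    refine Set.mem_iUnion₂.2 ⟨y, (Set.Finite.mem_toFinset htfin).2 hy, ?_⟩
    have h1' : g y p.1 = 1 := by simp [hgdef, Set.indicator_apply, hpy]
    have h2' : p.2 ∉ ball y (δ/2) := by
      intro hmem
      have : dist p.1 p.2 ≤ dist p.1 y + dist y p.2 := dist_triangle _ _ _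
      have d1 : dist p.1 y < δ/2 := mem_ball.1 hpy
      have d2 : dist y p.2 < δ/2 := by rw [dist_comm]; exact mem_ball.1 hmem
      linarith
    have h2'' : g y p.2 = 0 := by simp [hgdef, Set.indicator_apply, h2']
    show (1:ℝ) ≤ h y p
    rw [hhdef]; simp only []; rw [h1', h2'']; norm_num
  -- measure bound via integrals
  have hbound : ∀ n, ((ν n) Bad).toReal ≤ ∑ y ∈ s, ∫ p, h y p ∂(ν n) := by
    intro n
    haveI := hprob n
    have step1 : (ν n) Bad ≤ ∑ y ∈ s, (ν n) (S y) :=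
      (measure_mono hincl).trans (measure_biUnion_finset_le s S)
    have hne : (∑ y ∈ s, (ν n) (S y)) ≠ ⊤ :=
      (ENNReal.sum_lt_top.2 (fun y _ => measure_lt_top _ _)).ne
    have step2 : ((ν n) Bad).toReal ≤ (∑ y ∈ s, (ν n) (S y)).toReal :=
      ENNReal.toReal_mono hne step1
    rw [ENNReal.toReal_sum (fun y _ => (measure_lt_top _ _).ne)] at step2
    refine step2.trans (Finset.sum_le_sum (fun y _ => ?_))
    have hint : Integrable (h y) (ν n) := stmt4_bdd_integrable _ (hhmeas y) (hhbdd y)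
    have hind : ∫ p, (S y).indicator (fun _ => (1:ℝ)) p ∂(ν n) = ((ν n) (S y)).toReal := by
      rw [integral_indicator_const (1:ℝ) (hSmeas y)]; simp; rfl
    rw [← hind]
    refine integral_mono (Integrable.indicator (integrable_const 1) (hSmeas y)) hint ?_
    intro p
    by_cases hc : p ∈ S y
    · have : (1:ℝ) ≤ h y p := hc
      simpa [Set.indicator_apply, hc] using this
    · simp [Set.indicator_apply, hc, hhnn y p]
  refine squeeze_zero (fun n => ENNReal.toReal_nonneg) hbound ?_
  have : Tendsto (fun n => ∑ y ∈ s, ∫ p, h y p ∂(ν n)) atTop (𝓝 (∑ y ∈ s, 0)) :=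
    tendsto_finset_sum s (fun y _ =>
      stmt4_sq μ ν hprob h1 h2 hcorr (g y) (hgmeas y) 1 (hgbdd y))
  simpa using this

lemma stmt4_tight {X : Type*} [MetricSpace X] [CompleteSpace X] [SecondCountableTopology X]
    [MeasurableSpace X] [BorelSpace X] (μ : Measure X) [IsProbabilityMeasure μ]
    {ε : ℝ≥0∞} (hε : ε ≠ 0) : ∃ K : Set X, IsCompact K ∧ μ Kᶜ < ε := by
  rcases isEmpty_or_nonempty X with hX | hX
  · refine ⟨∅, isCompact_empty, ?_⟩
    have : (univ : Set X) = ∅ := Set.univ_eq_empty_iff.mpr hX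
    have h1 : μ Set.univ = 1 := measure_univ
    rw [this] at h1; simp at h1
  obtain ⟨u, hu⟩ := TopologicalSpace.exists_dense_seq X
  obtain ⟨δ, hδpos, hδsum⟩ := ENNReal.exists_pos_sum_of_countable hε ℕ
  -- for each k, pick m k with μ of complement of union of closed balls < δ k
  have key : ∀ k : ℕ, ∃ m : ℕ,
      μ (⋃ i ∈ Finset.range m, closedBall (u i) (1/(k+1)))ᶜ ≤ (δ k : ℝ≥0∞) := by
    intro k
    set A : ℕ → Set X := fun m => ⋃ i ∈ Finset.range m, closedBall (u i) (1/(k+1)) with hA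
    have hmono : Monotone A := by
      intro a b hab
      exact Set.biUnion_subset_biUnion_left (Finset.range_subset_range.2 hab)
    have hcov : (⋃ m, A m) = univ := by
      apply Set.eq_univ_of_forall
      intro x
      have : (0:ℝ) < 1/(k+1) := by positivity
      obtain ⟨i, hi⟩ := hu.exists_dist_lt x this
      exact Set.mem_iUnion.2 ⟨i+1, Set.mem_biUnion (Finset.self_mem_range_succ i)
        (mem_closedBall.2 (le_of_lt hi))⟩
    have htend : Tendsto (fun m => μ (A m)) atTop (𝓝 (μ (⋃ m, A m))) :=
      tendsto_measure_iUnion_atTop hmono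
    rw [hcov, measure_univ] at htend
    have hlt : (1:ℝ≥0∞) - δ k < 1 :=
      ENNReal.sub_lt_self ENNReal.one_ne_top one_ne_zero (by exact_mod_cast (hδpos k).ne')
    have hev : ∀ᶠ m in atTop, (1:ℝ≥0∞) - δ k < μ (A m) :=
      htend.eventually (eventually_gt_nhds hlt)
    obtain ⟨m, hm⟩ := hev.exists
    refine ⟨m, ?_⟩
    have hAm : MeasurableSet (A m) :=
      (isClosed_biUnion_finset (fun i _ => isClosed_closedBall)).measurableSet
    rw [measure_compl hAm (measure_ne_top μ _), measure_univ]
    rw [tsub_le_iff_right]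
    calc (1:ℝ≥0∞) ≤ (1 - δ k) + δ k := le_tsub_add
    _ ≤ μ (A m) + δ k := add_le_add_left hm.le _
    _ = δ k + μ (A m) := add_comm _ _
  choose m hm using key
  set S : Set X := ⋂ k, ⋃ i ∈ Finset.range (m k), closedBall (u i) (1/(k+1)) with hS
  refine ⟨S, ?_, ?_⟩
  · apply TotallyBounded.isCompact_of_isClosed
    · rw [Metric.totallyBounded_iff]
      intro r hr
      obtain ⟨k, hk⟩ := exists_nat_one_div_lt hr
      refine ⟨u '' (Finset.range (m k) : Set ℕ), (Set.toFinite _).image u, ?_⟩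
      intro x hx
      have hx' : x ∈ ⋃ i ∈ Finset.range (m k), closedBall (u i) (1/(k+1)) :=
        Set.mem_iInter.1 hx k
      obtain ⟨i, hi, hxi⟩ := Set.mem_iUnion₂.1 hx'
      exact Set.mem_iUnion₂.2 ⟨u i, Set.mem_image_of_mem u hi,
        mem_ball.2 (lt_of_le_of_lt (mem_closedBall.1 hxi) hk)⟩
    · exact isClosed_iInter (fun k => isClosed_biUnion_finset (fun i _ => isClosed_closedBall))
  · rw [Set.compl_iInter]
    calc μ (⋃ k, (⋃ i ∈ Finset.range (m k), closedBall (u i) (1/(k+1)))ᶜ)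
        ≤ ∑' k, μ (⋃ i ∈ Finset.range (m k), closedBall (u i) (1/(k+1)))ᶜ :=
          measure_iUnion_le _
      _ ≤ ∑' k, (δ k : ℝ≥0∞) := ENNReal.tsum_le_tsum hm
      _ < ε := hδsum

/-- **Remark 2.3 (b):** if probability measures `ν n` on `X × X` (X Polish) have both
marginals equal to `μ` and satisfy the correlation condition
`∫ f₁(x) f₂(y) dν_n → ∫ f₁ f₂ dμ` for all bounded Borel `f₁, f₂`, then `ν n` converges
weak* to the pushforward `μ̃` of `μ` under the diagonal map `x ↦ (x, x)`. -/
theorem stmt4 {X : Type*} [TopologicalSpace X] [PolishSpace X]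
    [MeasurableSpace X] [BorelSpace X]
    (μ : Measure X) [IsProbabilityMeasure μ]
    (ν : ℕ → Measure (X × X)) (hprob : ∀ n, IsProbabilityMeasure (ν n))
    (h1 : ∀ n, Measure.map Prod.fst (ν n) = μ)
    (h2 : ∀ n, Measure.map Prod.snd (ν n) = μ)
    (hcorr : ∀ f₁ f₂ : X → ℝ, Measurable f₁ → Measurable f₂ →
      (∃ C, ∀ x, |f₁ x| ≤ C) → (∃ C, ∀ x, |f₂ x| ≤ C) →
      Tendsto (fun n => ∫ p, f₁ p.1 * f₂ p.2 ∂(ν n)) atTop (𝓝 (∫ x, f₁ x * f₂ x ∂μ))) :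
    ∀ f : BoundedContinuousFunction (X × X) ℝ,
      Tendsto (fun n => ∫ p, f p ∂(ν n)) atTop
        (𝓝 (∫ p, f p ∂(Measure.map (fun x => (x, x)) μ))) := by
  intro F
  letI := TopologicalSpace.upgradeIsCompletelyMetrizable X
  have hdiag : Measurable (fun x : X => (x, x)) := measurable_id.prodMk measurable_id
  have hRHS : ∫ p, F p ∂(Measure.map (fun x => (x, x)) μ) = ∫ x, F (x, x) ∂μ :=
    integral_map hdiag.aemeasurable F.continuous.aestronglyMeasurable
  set c := ∫ x, F (x, x) ∂μ with hc
  have hfixmeas : Measurable (fun p : X × X => F (p.1, p.1)) :=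
    F.continuous.measurable.comp (measurable_fst.prodMk measurable_fst)
  have hfix : ∀ n, ∫ p, F (p.1, p.1) ∂(ν n) = c := by
    intro n
    rw [hc, ← h1 n]
    exact (integral_map measurable_fst.aemeasurable
      ((F.continuous.comp (continuous_id.prodMk continuous_id)).aestronglyMeasurable)).symm
  rw [hRHS, ← tendsto_sub_nhds_zero_iff, NormedAddCommGroup.tendsto_nhds_zero]
  intro ε hε
  set M := ‖F‖ with hMdef
  have hM : 0 ≤ M := norm_nonneg F
  set η := ε / (16 * (M + 1)) with hη
  have hηpos : 0 < η := by positivity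
  obtain ⟨K, hKc, hKμ⟩ := stmt4_tight μ (ε := ENNReal.ofReal η)
    (by simp only [ne_eq, ENNReal.ofReal_eq_zero, not_le]; linarith)
  have hKm : MeasurableSet K := hKc.isClosed.measurableSet
  have hKtoReal : (μ Kᶜ).toReal < η := by
    have := ENNReal.toReal_strict_mono ENNReal.ofReal_ne_top hKμ
    rwa [ENNReal.toReal_ofReal hηpos.le] at this
  have hUC := (hKc.prod hKc).uniformContinuousOn_of_continuous F.continuous.continuousOn
  rw [Metric.uniformContinuousOn_iff] at hUC
  obtain ⟨δ, hδpos, hδ⟩ := hUC (ε/2) (by positivity)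
  set T : Set (X × X) := {p : X × X | p.1 ∈ K ∧ δ ≤ dist p.1 p.2} with hT
  have hTm : MeasurableSet T := by
    refine MeasurableSet.inter (measurable_fst hKm) ?_
    exact measurableSet_le measurable_const (continuous_fst.dist continuous_snd).measurable
  have hTtend := stmt4_offdiag μ ν hprob h1 h2 hcorr K hKc δ hδpos
  have hTev : ∀ᶠ n in atTop, ((ν n) T).toReal < η :=
    hTtend.eventually (eventually_lt_nhds hηpos)
  filter_upwards [hTev] with n hTn
  haveI := hprob n
  set W : Set (X × X) := ({p : X × X | p.1 ∉ K} ∪ {p : X × X | p.2 ∉ K}) ∪ T with hW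
  have hWm : MeasurableSet W :=
    (((measurable_fst hKm.compl).union (measurable_snd hKm.compl))).union hTm
  have hpt : ∀ p : X × X, ‖F p - F (p.1, p.1)‖
      ≤ ε/2 + (2*M) * W.indicator (fun _ => (1:ℝ)) p := by
    intro p
    by_cases hpW : p ∈ W
    · rw [Set.indicator_of_mem hpW]
      have b1 : ‖F p‖ ≤ M := F.norm_coe_le_norm p
      have b2 : ‖F (p.1, p.1)‖ ≤ M := F.norm_coe_le_norm _
      have := norm_sub_le (F p) (F (p.1, p.1))
      linarith
    · rw [Set.indicator_of_notMem hpW]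
      simp only [hW, Set.mem_union, Set.mem_setOf_eq, not_or, not_and, not_le, not_not] at hpW
      obtain ⟨⟨hp1, hp2⟩, hp3⟩ := hpW
      have hdist : dist p.1 p.2 < δ := by
        by_contra hge
        exact hp3 (show p ∈ T from ⟨hp1, le_of_not_gt hge⟩)
      have hmem1 : p ∈ K ×ˢ K := Set.mem_prod.2 ⟨hp1, hp2⟩
      have hmem2 : (p.1, p.1) ∈ K ×ˢ K := Set.mem_prod.2 ⟨hp1, hp1⟩
      have hd : dist p (p.1, p.1) < δ := by
        rw [Prod.dist_eq]
        simp only [dist_self]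
        rw [sup_lt_iff]
        exact ⟨hδpos, by rwa [dist_comm]⟩
      have := hδ p hmem1 (p.1, p.1) hmem2 hd
      rw [dist_eq_norm] at this
      linarith
  have hint1 : Integrable (fun p : X × X => F p) (ν n) := F.integrable _
  have hint2 : Integrable (fun p : X × X => F (p.1, p.1)) (ν n) :=
    stmt4_bdd_integrable _ hfixmeas (C := M)
      (fun p => by rw [← Real.norm_eq_abs]; exact F.norm_coe_le_norm _)
  have hIind : Integrable (fun p : X × X => W.indicator (fun _ => (1:ℝ)) p) (ν n) :=
    (integrable_const (1:ℝ)).indicator hWm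
  have key : ‖(∫ p, F p ∂(ν n)) - c‖ ≤ ε/2 + (2*M) * ((ν n) W).toReal := by
    rw [← hfix n, ← integral_sub hint1 hint2]
    calc ‖∫ p, (F p - F (p.1, p.1)) ∂(ν n)‖
        ≤ ∫ p, ‖F p - F (p.1, p.1)‖ ∂(ν n) := norm_integral_le_integral_norm _
      _ ≤ ∫ p, (ε/2 + (2*M) * W.indicator (fun _ => (1:ℝ)) p) ∂(ν n) := by
          refine integral_mono (hint1.sub hint2).norm ?_ hpt
          exact (integrable_const (ε/2)).add (hIind.const_mul (2*M))
      _ = ε/2 + (2*M) * ((ν n) W).toReal := by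
          rw [integral_add (integrable_const (ε/2)) (hIind.const_mul (2*M)),
            integral_const, MeasureTheory.integral_const_mul,
            integral_indicator_const (1:ℝ) hWm]
          simp [measure_univ, Measure.real]
  have hW1 : (ν n) {p : X × X | p.1 ∉ K} = μ Kᶜ := by
    rw [← h1 n, Measure.map_apply measurable_fst hKm.compl]
    rfl
  have hW2 : (ν n) {p : X × X | p.2 ∉ K} = μ Kᶜ := by
    rw [← h2 n, Measure.map_apply measurable_snd hKm.compl]
    rfl
  have hWle : (ν n) W ≤ μ Kᶜ + μ Kᶜ + (ν n) T := by
    calc (ν n) W ≤ (ν n) ({p : X × X | p.1 ∉ K} ∪ {p : X × X | p.2 ∉ K}) + (ν n) T :=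
        measure_union_le _ _
      _ ≤ ((ν n) {p : X × X | p.1 ∉ K} + (ν n) {p : X × X | p.2 ∉ K}) + (ν n) T :=
        add_le_add_left (measure_union_le _ _) _
      _ = μ Kᶜ + μ Kᶜ + (ν n) T := by rw [hW1, hW2]
  have hWtoReal : ((ν n) W).toReal < 3 * η := by
    have hfin : (μ Kᶜ + μ Kᶜ + (ν n) T) ≠ ⊤ := by
      refine ENNReal.add_ne_top.2 ⟨ENNReal.add_ne_top.2 ⟨?_, ?_⟩, ?_⟩ <;>
        exact (measure_lt_top _ _).ne
    have := ENNReal.toReal_mono hfin hWle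
    rw [ENNReal.toReal_add (ENNReal.add_ne_top.2 ⟨(measure_lt_top _ _).ne, (measure_lt_top _ _).ne⟩)
      (measure_lt_top _ _).ne, ENNReal.toReal_add (measure_lt_top _ _).ne
      (measure_lt_top _ _).ne] at this
    linarith
  have hWnn : 0 ≤ ((ν n) W).toReal := ENNReal.toReal_nonneg
  have hηval : η * (16 * (M + 1)) = ε := by
    rw [hη]; field_simp
  nlinarith [mul_le_mul_of_nonneg_left hWtoReal.le (by linarith : (0:ℝ) ≤ 2*M), key,
    mul_pos hηpos (by linarith : (0:ℝ) < M + 1)]
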